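/- arXiv:1203.6432 — 2 statements merged into one kernel-verified Lean document; each statement's English description precedes it below -/
import Mathlib

section
/- Suppose M is contractive with contraction rate 0 < a < 1. Then (i) UL ≤ a·L + b pointwise on K, and (ii) U^n L ≤ a^n·L + b/(1−a) pointwise on K for all n ≥ 0. -/
open MeasureTheory Filter Topology
open scoped ENNReal NNReal Classical

noncomputable section

/-- A countable Markov system `(K_{i(e)}, w_e, p_e)_{e ∈ E}` on a metric space `K`:
a partition `(K_j)_{j ∈ N}` of `K` into nonempty Borel sets, source and target maps
`i, t : E → N` (`i` surjective), and for each `e ∈ E` Borel maps `w_e` and probability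
functions `p_e` (extended by zero outside `K_{i(e)}`) with
`∑_{e, i(e)=j} p_e(y) = 1` for `y ∈ K_j`. -/
structure MarkovSystem (K : Type*) [MetricSpace K] [MeasurableSpace K]
    (N : Type*) (E : Type*) where
  Kset : N → Set K
  Kset_nonempty : ∀ j, (Kset j).Nonempty
  Kset_measurable : ∀ j, MeasurableSet (Kset j)
  Kset_disjoint : Pairwise (Function.onFun Disjoint Kset)
  Kset_cover : (⋃ j, Kset j) = Set.univ
  i : E → N
  t : E → N
  i_surj : Function.Surjective i
  w : E → K → K
  p : E → K → ℝ
  w_measurable : ∀ e, Measurable (w e)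
  p_measurable : ∀ e, Measurable (p e)
  p_nonneg : ∀ e x, 0 ≤ p e x
  p_le_one : ∀ e x, p e x ≤ 1
  p_zero_outside : ∀ e x, x ∉ Kset (i e) → p e x = 0
  w_mapsTo : ∀ e, Set.MapsTo (w e) (Kset (i e)) (Kset (t e))
  p_pos_somewhere : ∀ e, ∃ x ∈ Kset (i e), 0 < p e x
  p_tsum_one : ∀ j, ∀ x ∈ Kset j, (∑' e : {e : E // i e = j}, p e.val x) = 1

/-- `Ē = E ∪ {∞}` (one-point compactification); with `E` countable its Borel σ-algebra
consists of all subsets. -/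
instance optionMeasurableSpace (E : Type*) : MeasurableSpace (Option E) := ⊤

/-- The code space `Σ̄ = Ē^ℤ`, carrying the product σ-algebra. -/
abbrev CodeSpace (E : Type*) : Type _ := ℤ → Option E

/-- The left shift `S` on the code space, `(Sσ)_{k-1} = σ_k`. -/
def shiftMap (E : Type*) : CodeSpace E → CodeSpace E := fun σ k => σ (k + 1)

/-- The cylinder set `_m[es₀, …, es_{n}] = {σ : σ_{m+k} = es_k}`. -/
def cylSetL {E : Type*} (m : ℤ) (es : List (Option E)) : Set (CodeSpace E) :=
  {σ | ∀ (k : ℕ) (h : k < es.length), σ (m + (k : ℤ)) = es.get ⟨k, h⟩}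

/-- The σ-algebra `𝓕` generated by the cylinder sets `_m[e_m, …, e_0]`, `m ≤ 0`. -/
def pastAlgebra (E : Type*) : MeasurableSpace (CodeSpace E) :=
  MeasurableSpace.generateFrom
    {A | ∃ es : List (Option E), es ≠ [] ∧ A = cylSetL (1 - (es.length : ℤ)) es}

/-- The conditional entropy `h_S(Λ) = H_Λ((_1[e])_{e ∈ Ē} | 𝓕)`. -/
def entropyS {E : Type*} (Λ : Measure (CodeSpace E)) : ℝ≥0∞ :=
  ∑' eo : Option E,
    ∫⁻ σ, ENNReal.ofReal
        (Real.negMulLog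
          ((Λ[Set.indicator {τ : CodeSpace E | τ 1 = eo} (fun _ => (1 : ℝ)) | pastAlgebra E]) σ)) ∂Λ

namespace MarkovSystem

variable {K : Type*} [MetricSpace K] [MeasurableSpace K] {N E : Type*}

/-- The Markov operator `Uf = ∑_e p_e · (f ∘ w_e)` acting on nonnegative Borel functions. -/
def markovOp (M : MarkovSystem K N E) (f : K → ℝ≥0∞) : K → ℝ≥0∞ :=
  fun x => ∑' e : E, ENNReal.ofReal (M.p e x) * f (M.w e x)

/-- The adjoint operator `U*` acting on measures, `(U*ν)(B) = ∫ U(1_B) dν`. -/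
def adjOp (M : MarkovSystem K N E) (ν : Measure K) : Measure K :=
  Measure.sum fun e : E =>
    Measure.map (M.w e) (ν.withDensity fun x => ENNReal.ofReal (M.p e x))

/-- `μ ∈ P(M)`: `μ` is an invariant Borel probability measure, `U*μ = μ`. -/
def IsInvariantMeasure (M : MarkovSystem K N E) (μ : Measure K) : Prop :=
  IsProbabilityMeasure μ ∧ M.adjOp μ = μ

/-- The path space `Σ_G`: all coordinates lie in `E` and `i(σ_{n+1}) = t(σ_n)`. -/
def pathSpace (M : MarkovSystem K N E) : Set (CodeSpace E) :=
  {σ | ∀ n : ℤ, ∃ e e' : E, σ n = some e ∧ σ (n + 1) = some e' ∧ M.i e' = M.t e}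

/-- `T_j = {σ ∈ Σ_G : t(σ_0) = j}`. -/
def Tset (M : MarkovSystem K N E) (j : N) : Set (CodeSpace E) :=
  {σ | σ ∈ M.pathSpace ∧ ∃ e : E, σ 0 = some e ∧ M.t e = j}

/-- `w` extended to `Ē`, with `w_∞ = id`. -/
def wext (M : MarkovSystem K N E) : Option E → K → K := fun o => o.elim id M.w

/-- `p` extended to `Ē`, with `p_∞ = 0`. -/
def pext (M : MarkovSystem K N E) : Option E → K → ℝ := fun o => o.elim (fun _ => 0) M.p

/-- `i` extended to `Ē`, with `i(∞) = j₀`. -/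
def iext (M : MarkovSystem K N E) (j0 : N) : Option E → N := fun o => o.elim j0 M.i

/-- `t` extended to `Ē`, with `t(∞) = j₀`. -/
def text (M : MarkovSystem K N E) (j0 : N) : Option E → N := fun o => o.elim j0 M.t

/-- `iterW M σ n y = w_{σ_0} ∘ w_{σ_{-1}} ∘ ⋯ ∘ w_{σ_{-n}} (y)`. -/
def iterW (M : MarkovSystem K N E) (σ : CodeSpace E) : ℕ → K → K
  | 0, y => M.wext (σ 0) y
  | n + 1, y => M.iterW σ n (M.wext (σ (-(n + 1 : ℤ))) y)

/-- `orbit M j0 xp σ n = w_{σ_0} ∘ ⋯ ∘ w_{σ_{-n}} (x_{i(σ_{-n})})`. -/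
def orbit (M : MarkovSystem K N E) (j0 : N) (xp : N → K) (σ : CodeSpace E) (n : ℕ) : K :=
  M.iterW σ n (xp (M.iext j0 (σ (-(n : ℤ)))))

/-- `D`: the set of `σ ∈ Σ_G` for which `lim_{m → -∞} w_{σ_0} ∘ ⋯ ∘ w_{σ_m}(x_{i(σ_m)})` exists. -/
def codeDomain (M : MarkovSystem K N E) (j0 : N) (xp : N → K) : Set (CodeSpace E) :=
  {σ | σ ∈ M.pathSpace ∧ ∃ l : K, Tendsto (fun n : ℕ => M.orbit j0 xp σ n) atTop (𝓝 l)}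

/-- The coding map `F`: the above limit on `D`, and `x_{t(σ_0)}` elsewhere. -/
def code (M : MarkovSystem K N E) (j0 : N) (xp : N → K) (σ : CodeSpace E) : K :=
  if h : σ ∈ M.codeDomain j0 xp then h.2.choose else xp (M.text j0 (σ 0))

/-- `Λ ∈ E(M)`: `Λ` is a shift-invariant Borel probability measure with `Λ(D) = 1` and
`E_Λ(1_{_1[e]} | 𝓕) = p_e ∘ F` `Λ`-a.e. for every `e ∈ E` (an equilibrium state). -/
def IsEquilibrium (M : MarkovSystem K N E) (j0 : N) (xp : N → K)
    (Λ : Measure (CodeSpace E)) : Prop :=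
  IsProbabilityMeasure Λ ∧ Measure.map (shiftMap E) Λ = Λ ∧
    Λ (M.codeDomain j0 xp) = 1 ∧
    ∀ e : E,
      (Λ[Set.indicator {σ : CodeSpace E | σ 1 = some e} (fun _ => (1 : ℝ)) | pastAlgebra E])
        =ᵐ[Λ] fun σ => M.p e (M.code j0 xp σ)

/-- `pbar` is the family of continuous extensions `p̄_e` of `p_e|_{K_{i(e)}}` to the closure
of `K_{i(e)}`, extended further by zero on `K`. -/
def IsUCExtensionP (M : MarkovSystem K N E) (pbar : E → K → ℝ) : Prop :=
  ∀ e : E, ContinuousOn (pbar e) (closure (M.Kset (M.i e))) ∧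
    (∀ x ∈ M.Kset (M.i e), pbar e x = M.p e x) ∧
    (∀ x, x ∉ closure (M.Kset (M.i e)) → pbar e x = 0)

/-- `wb` is a family of continuous extensions `w̄_e` of `w_e|_{K_{i(e)}}` to the closure
of `K_{i(e)}`. -/
def IsUCExtensionW (M : MarkovSystem K N E) (wb : E → K → K) : Prop :=
  ∀ e : E, ContinuousOn (wb e) (closure (M.Kset (M.i e))) ∧
    (∀ x ∈ M.Kset (M.i e), wb e x = M.w e x)

/-- The Markov system is uniformly continuous: each `w_e|_{K_{i(e)}}` and `p_e|_{K_{i(e)}}`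
is uniformly continuous. -/
def IsUniformlyContinuous (M : MarkovSystem K N E) : Prop :=
  ∀ e : E, UniformContinuousOn (M.w e) (M.Kset (M.i e)) ∧
    UniformContinuousOn (M.p e) (M.Kset (M.i e))

/-- `∂p_e = p̄_e · 1_{cl(K_{i(e)}) \ K_{i(e)}}`. -/
def dp (M : MarkovSystem K N E) (pbar : E → K → ℝ) (e : E) : K → ℝ :=
  Set.indicator (closure (M.Kset (M.i e)) \ M.Kset (M.i e)) (pbar e)

/-- `Λ ∈ Ẽ(M)` (asymptotic state): shift-invariant probability with `Λ(D) = 1` and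
`E_Λ(1_{_1[e]} | 𝓕) = (p̄_e ∘ F)·1_{T_{i(e)}}` `Λ`-a.e. for every `e`. -/
def IsAsymptotic (M : MarkovSystem K N E) (j0 : N) (xp : N → K) (pbar : E → K → ℝ)
    (Λ : Measure (CodeSpace E)) : Prop :=
  IsProbabilityMeasure Λ ∧ Measure.map (shiftMap E) Λ = Λ ∧
    Λ (M.codeDomain j0 xp) = 1 ∧
    ∀ e : E,
      (Λ[Set.indicator {σ : CodeSpace E | σ 1 = some e} (fun _ => (1 : ℝ)) | pastAlgebra E])
        =ᵐ[Λ] Set.indicator (M.Tset (M.i e)) (fun σ => pbar e (M.code j0 xp σ))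

/-- `Λ ∈ E_⊥(M)`: shift-invariant probability with `Λ(D) = 1` and
`E_Λ(1_{_1[e]} | 𝓕) = (∂p_e ∘ F)·1_{T_{i(e)}}` `Λ`-a.e. for every `e`. -/
def IsPerp (M : MarkovSystem K N E) (j0 : N) (xp : N → K) (pbar : E → K → ℝ)
    (Λ : Measure (CodeSpace E)) : Prop :=
  IsProbabilityMeasure Λ ∧ Measure.map (shiftMap E) Λ = Λ ∧
    Λ (M.codeDomain j0 xp) = 1 ∧
    ∀ e : E,
      (Λ[Set.indicator {σ : CodeSpace E | σ 1 = some e} (fun _ => (1 : ℝ)) | pastAlgebra E])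
        =ᵐ[Λ] Set.indicator (M.Tset (M.i e)) (fun σ => M.dp pbar e (M.code j0 xp σ))

/-- `G = ⋃_{k ≥ 0} ⋃_{j ∈ N} S^{-k}(F^{-1}(K_j) ∩ T_j)`. -/
def Gset (M : MarkovSystem K N E) (j0 : N) (xp : N → K) : Set (CodeSpace E) :=
  ⋃ (k : ℕ) (j : N), (shiftMap E)^[k] ⁻¹' ((M.code j0 xp) ⁻¹' (M.Kset j) ∩ M.Tset j)

/-- `M` is non-degenerate: for every asymptotic state `Λ` there is `i ∈ N` with
`Λ(T_i ∩ F^{-1}(K_i)) > 0`. -/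
def IsNonDegenerate (M : MarkovSystem K N E) (j0 : N) (xp : N → K) (pbar : E → K → ℝ) : Prop :=
  ∀ Λ : Measure (CodeSpace E), M.IsAsymptotic j0 xp pbar Λ →
    ∃ i : N, 0 < Λ (M.Tset i ∩ (M.code j0 xp) ⁻¹' (M.Kset i))

/-- `M` is consistent: `F(Λ) ∈ P(M)` for every asymptotic state `Λ`. -/
def IsConsistent (M : MarkovSystem K N E) (j0 : N) (xp : N → K) (pbar : E → K → ℝ) : Prop :=
  ∀ Λ : Measure (CodeSpace E), M.IsAsymptotic j0 xp pbar Λ →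
    M.IsInvariantMeasure (Measure.map (M.code j0 xp) Λ)

/-- `Rf = ∑_e ∂p_e · (f ∘ w̄_e)`. -/
def Rop (M : MarkovSystem K N E) (pbar : E → K → ℝ) (wb : E → K → K)
    (f : K → ℝ≥0∞) : K → ℝ≥0∞ :=
  fun x => ∑' e : E, ENNReal.ofReal (M.dp pbar e x) * f (wb e x)

/-- `Ω = ⋂_{n ≥ 1} {R^n 1 ≥ 1}`. -/
def OmegaSet (M : MarkovSystem K N E) (pbar : E → K → ℝ) (wb : E → K → K) : Set K :=
  ⋂ n : ℕ, {x : K | 1 ≤ (M.Rop pbar wb)^[n + 1] (fun _ => 1) x}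

/-- `ξ_j = ∑_{e, i(e) = j} sup_{x ∈ K_j} p_e(x)`. -/
def xi (M : MarkovSystem K N E) (j : N) : ℝ≥0∞ :=
  ∑' e : {e : E // M.i e = j}, ⨆ x ∈ M.Kset j, ENNReal.ofReal (M.p e.val x)

/-- `M` has a dominating Markov chain: `ξ_j < ∞` for all `j ∈ N`. -/
def HasDominatingChain (M : MarkovSystem K N E) : Prop := ∀ j : N, M.xi j ≠ ⊤

/-- `ξ_j · q_{j j'} = ∑_{e, i(e) = j, t(e) = j'} sup_{x ∈ K_j} p_e(x)`. -/
def xiq (M : MarkovSystem K N E) (j j' : N) : ℝ≥0∞ :=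
  ∑' e : {e : E // M.i e = j ∧ M.t e = j'}, ⨆ x ∈ M.Kset j, ENNReal.ofReal (M.p e.val x)

/-- `c = ∑_{j'} sup_j ξ_j q_{j j'}`. -/
def cConst (M : MarkovSystem K N E) : ℝ≥0∞ := ∑' j' : N, ⨆ j : N, M.xiq j j'

/-- `α^{x_0}_n({j}) = (1/n) ∑_{k=1}^n ((U*)^k δ_{x_0})(K_j)`. -/
def alphaMeas (M : MarkovSystem K N E) (x0 : K) (n : ℕ) (j : N) : ℝ≥0∞ :=
  (n : ℝ≥0∞)⁻¹ * ∑ k ∈ Finset.range n, (M.adjOp^[k + 1] (Measure.dirac x0)) (M.Kset j)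

/-- Condition (T) at `x_0`: the sequence `(α^{x_0}_n)_n` is uniformly tight. -/
def ConditionT (M : MarkovSystem K N E) (x0 : K) : Prop :=
  ∀ ε : ℝ, 0 < ε → ∃ V : Finset N,
    ∀ n : ℕ, (∑' j : {j : N // j ∉ V}, M.alphaMeas x0 (n + 1) j.val) < ENNReal.ofReal ε

/-- `M` is contractive with contraction rate `a`:
`∑_{e, i(e) = j} p_e(x) d(w_e x, w_e y) ≤ a·d(x, y)` on each `K_j`. -/
def IsContractive (M : MarkovSystem K N E) (a : ℝ) : Prop :=
  ∀ j : N, ∀ x ∈ M.Kset j, ∀ y ∈ M.Kset j,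
    (∑' e : {e : E // M.i e = j},
        ENNReal.ofReal (M.p e.val x * dist (M.w e.val x) (M.w e.val y)))
      ≤ ENNReal.ofReal (a * dist x y)

/-- `L(x) = ∑_j d(x, x_j)·1_{K_j}(x)`. -/
def Lfun (M : MarkovSystem K N E) (xp : N → K) : K → ℝ≥0∞ :=
  fun x => ∑' j : N, Set.indicator (M.Kset j) (fun y => ENNReal.ofReal (dist y (xp j))) x

/-- `b = sup_j sup_{x ∈ K_j} ∑_{e, i(e) = j} p_e(x)·d(w_e(x_{i(e)}), x_{t(e)})`. -/
def bConst (M : MarkovSystem K N E) (xp : N → K) : ℝ≥0∞ :=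
  ⨆ j : N, ⨆ x ∈ M.Kset j,
    ∑' e : {e : E // M.i e = j},
      ENNReal.ofReal (M.p e.val x * dist (M.w e.val (xp (M.i e.val))) (xp (M.t e.val)))

/-- `P^m_x` evaluated on a word: `p_{e_0}(x)·p_{e_1}(w_{e_0}x)·⋯`. -/
def wordProb (M : MarkovSystem K N E) : List (Option E) → K → ℝ
  | [], _ => 1
  | o :: rest, x => M.pext o x * M.wordProb rest (M.wext o x)

/-- `Λ = Φ(μ)`: `Λ` is a shift-invariant Borel probability measure with
`Λ(_m[e_m, …, e_n]) = ∫ P^m_x(_m[e_m, …, e_n]) dμ(x)` for all cylinders with `m ≤ 0`. -/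
def IsPhiOf (M : MarkovSystem K N E) (μ : Measure K) (Λ : Measure (CodeSpace E)) : Prop :=
  IsProbabilityMeasure Λ ∧ Measure.map (shiftMap E) Λ = Λ ∧
    ∀ m : ℤ, m ≤ 0 → ∀ es : List (Option E),
      Λ (cylSetL m es) = ∫⁻ x, ENNReal.ofReal (M.wordProb es x) ∂μ

/-- The (negative of the) energy function: `-u(σ) = -log p_{σ_1}(F(σ))` on `D`
(`+∞` if `p_{σ_1}(F(σ)) = 0`) and `+∞` off `D`, valued in `[0, ∞]`. -/
def negEnergy (M : MarkovSystem K N E) (j0 : N) (xp : N → K) (σ : CodeSpace E) : ℝ≥0∞ :=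
  if σ ∈ M.codeDomain j0 xp then
    (σ 1).elim ⊤ fun e =>
      if M.p e (M.code j0 xp σ) = 0 then ⊤
      else ENNReal.ofReal (-Real.log (M.p e (M.code j0 xp σ)))
  else ⊤

/-- The free energy `h_S(Λ) + ∫ u dΛ`, as an extended real number. -/
def freeEnergy (M : MarkovSystem K N E) (j0 : N) (xp : N → K)
    (Λ : Measure (CodeSpace E)) : EReal :=
  (entropyS Λ : EReal) - ((∫⁻ σ, M.negEnergy j0 xp σ ∂Λ : ℝ≥0∞) : EReal)

/-- `Λ₀ ∈ E(u)`: `Λ₀` is a thermodynamic equilibrium state for the energy function `u`. -/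
def IsEquilibriumForU (M : MarkovSystem K N E) (j0 : N) (xp : N → K)
    (Λ0 : Measure (CodeSpace E)) : Prop :=
  IsProbabilityMeasure Λ0 ∧ Measure.map (shiftMap E) Λ0 = Λ0 ∧ entropyS Λ0 ≠ ⊤ ∧
    M.freeEnergy j0 xp Λ0 =
      sSup {r : EReal | ∃ Λ : Measure (CodeSpace E),
        IsProbabilityMeasure Λ ∧ Measure.map (shiftMap E) Λ = Λ ∧ entropyS Λ ≠ ⊤ ∧
          r = M.freeEnergy j0 xp Λ}

end MarkovSystem

end


variable {K : Type*} [MetricSpace K] [CompleteSpace K] [MeasurableSpace K] [BorelSpace K]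
  {N E : Type*} [Countable N] [Countable E]


section Aux

variable {K : Type*} [MetricSpace K] [MeasurableSpace K] {N E : Type*}

namespace MarkovSystem

lemma Lfun_eq_of_mem (M : MarkovSystem K N E) (xp : N → K) {x : K} {j : N}
    (hx : x ∈ M.Kset j) : M.Lfun xp x = ENNReal.ofReal (dist x (xp j)) := by
  unfold Lfun
  rw [tsum_eq_single j]
  · rw [Set.indicator_of_mem hx]
  · intro j' hj'
    apply Set.indicator_of_notMem
    intro hx'
    exact Set.disjoint_left.mp (M.Kset_disjoint hj') hx' hx

lemma markovOp_eq_subtype (M : MarkovSystem K N E) (f : K → ℝ≥0∞) {x : K} {j : N}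
    (hx : x ∈ M.Kset j) :
    M.markovOp f x
      = ∑' e : {e : E // M.i e = j}, ENNReal.ofReal (M.p e.val x) * f (M.w e.val x) := by
  unfold markovOp
  have hsupp : Function.support
      (fun e : E => ENNReal.ofReal (M.p e x) * f (M.w e x)) ⊆ {e : E | M.i e = j} := by
    intro e he
    by_contra hej
    have hpx : M.p e x = 0 := by
      apply M.p_zero_outside
      intro hxi
      exact hej (by
        by_contra h
        exact Set.disjoint_left.mp (M.Kset_disjoint h) hxi hx)
    simp [hpx] at he
  exact (tsum_subtype_eq_of_support_subset hsupp).symm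

lemma tsum_ofReal_p_eq_one (M : MarkovSystem K N E) {x : K} {j : N} (hx : x ∈ M.Kset j) :
    ∑' e : {e : E // M.i e = j}, ENNReal.ofReal (M.p e.val x) = 1 := by
  have h1 := M.p_tsum_one j x hx
  have hs : Summable (fun e : {e : E // M.i e = j} => M.p e.val x) := by
    by_contra h
    rw [tsum_eq_zero_of_not_summable h] at h1
    norm_num at h1
  rw [← ENNReal.ofReal_tsum_of_nonneg (fun e => M.p_nonneg _ _) hs, h1, ENNReal.ofReal_one]

lemma markovOp_one (M : MarkovSystem K N E) {x : K} {j : N} (hx : x ∈ M.Kset j) :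
    M.markovOp (fun _ => (1 : ℝ≥0∞)) x = 1 := by
  rw [M.markovOp_eq_subtype _ hx]
  simpa using M.tsum_ofReal_p_eq_one hx

lemma markovOp_L_le (M : MarkovSystem K N E) (xp : N → K) (hxp : ∀ j, xp j ∈ M.Kset j)
    (a : ℝ) (ha0 : 0 < a) (hcon : M.IsContractive a) (x : K) :
    M.markovOp (M.Lfun xp) x ≤ ENNReal.ofReal a * M.Lfun xp x + M.bConst xp := by
  obtain ⟨j, hx⟩ : ∃ j, x ∈ M.Kset j := by
    have := M.Kset_cover ▸ Set.mem_univ x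
    simpa using Set.mem_iUnion.mp (M.Kset_cover ▸ Set.mem_univ x)
  rw [M.markovOp_eq_subtype _ hx]
  have hterm : ∀ e : {e : E // M.i e = j},
      ENNReal.ofReal (M.p e.val x) * M.Lfun xp (M.w e.val x)
        ≤ ENNReal.ofReal (M.p e.val x * dist (M.w e.val x) (M.w e.val (xp j)))
          + ENNReal.ofReal (M.p e.val x * dist (M.w e.val (xp (M.i e.val))) (xp (M.t e.val))) := by
    intro e
    have hwx : M.w e.val x ∈ M.Kset (M.t e.val) := M.w_mapsTo e.val (by rw [e.prop]; exact hx)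
    rw [M.Lfun_eq_of_mem xp hwx, ← ENNReal.ofReal_mul (M.p_nonneg _ _),
      ← ENNReal.ofReal_add (mul_nonneg (M.p_nonneg _ _) dist_nonneg)
        (mul_nonneg (M.p_nonneg _ _) dist_nonneg)]
    apply ENNReal.ofReal_le_ofReal
    rw [← mul_add]
    apply mul_le_mul_of_nonneg_left _ (M.p_nonneg _ _)
    rw [e.prop]
    exact dist_triangle _ _ _
  calc ∑' e : {e : E // M.i e = j}, ENNReal.ofReal (M.p e.val x) * M.Lfun xp (M.w e.val x)
      ≤ ∑' e : {e : E // M.i e = j},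
          (ENNReal.ofReal (M.p e.val x * dist (M.w e.val x) (M.w e.val (xp j)))
            + ENNReal.ofReal (M.p e.val x * dist (M.w e.val (xp (M.i e.val))) (xp (M.t e.val)))) :=
        Summable.tsum_le_tsum hterm ENNReal.summable ENNReal.summable
    _ = (∑' e : {e : E // M.i e = j},
          ENNReal.ofReal (M.p e.val x * dist (M.w e.val x) (M.w e.val (xp j))))
        + ∑' e : {e : E // M.i e = j},
          ENNReal.ofReal (M.p e.val x * dist (M.w e.val (xp (M.i e.val))) (xp (M.t e.val))) :=
        ENNReal.tsum_add
    _ ≤ ENNReal.ofReal a * M.Lfun xp x + M.bConst xp := by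
        gcongr
        · calc _ ≤ ENNReal.ofReal (a * dist x (xp j)) := hcon j x hx (xp j) (hxp j)
            _ = ENNReal.ofReal a * M.Lfun xp x := by
              rw [ENNReal.ofReal_mul ha0.le, M.Lfun_eq_of_mem xp hx]
        · unfold MarkovSystem.bConst
          refine le_trans ?_ (le_iSup (fun j => ⨆ x ∈ M.Kset j,
            ∑' e : {e : E // M.i e = j},
              ENNReal.ofReal (M.p e.val x * dist (M.w e.val (xp (M.i e.val))) (xp (M.t e.val)))) j)
          exact le_biSup (fun y => ∑' e : {e : E // M.i e = j},
            ENNReal.ofReal (M.p e.val y * dist (M.w e.val (xp (M.i e.val))) (xp (M.t e.val)))) hx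

lemma markovOp_mono (M : MarkovSystem K N E) {f g : K → ℝ≥0∞} (h : ∀ y, f y ≤ g y) (x : K) :
    M.markovOp f x ≤ M.markovOp g x :=
  Summable.tsum_le_tsum (fun e => mul_le_mul_right (h _) _) ENNReal.summable ENNReal.summable

lemma markovOp_affine (M : MarkovSystem K N E) (f : K → ℝ≥0∞) (c1 c2 : ℝ≥0∞) (x : K) :
    M.markovOp (fun y => c1 * f y + c2) x = c1 * M.markovOp f x + c2 * M.markovOp (fun _ => 1) x := by
  unfold markovOp
  rw [← ENNReal.tsum_mul_left, ← ENNReal.tsum_mul_left, ← ENNReal.tsum_add]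
  apply tsum_congr
  intro e
  ring

end MarkovSystem

end Aux

/-- If `M` is contractive with contraction rate `0 < a < 1`, then
(i) `UL ≤ a·L + b` and (ii) `UⁿL ≤ aⁿ·L + b/(1−a)` pointwise on `K`, for all `n ≥ 0`. -/
theorem markovOp_L_estimates
    (M : MarkovSystem K N E) (j0 : N) (xp : N → K) (hxp : ∀ j, xp j ∈ M.Kset j)
    (a : ℝ) (ha0 : 0 < a) (ha1 : a < 1) (hcon : M.IsContractive a) :
    (∀ x : K, M.markovOp (M.Lfun xp) x ≤ ENNReal.ofReal a * M.Lfun xp x + M.bConst xp) ∧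
    (∀ (n : ℕ) (x : K), (M.markovOp)^[n] (M.Lfun xp) x ≤
      ENNReal.ofReal (a ^ n) * M.Lfun xp x + M.bConst xp / (1 - ENNReal.ofReal a)) := by
  have hL := M.markovOp_L_le xp hxp a ha0 hcon
  refine ⟨hL, ?_⟩
  have key : ∀ (n : ℕ) (x : K), (M.markovOp)^[n] (M.Lfun xp) x ≤
      ENNReal.ofReal a ^ n * M.Lfun xp x
        + M.bConst xp * ∑ k ∈ Finset.range n, ENNReal.ofReal a ^ k := by
    intro n
    induction n with
    | zero => intro x; simp
    | succ n ih =>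
      intro x
      rw [Function.iterate_succ_apply']
      calc M.markovOp ((M.markovOp)^[n] (M.Lfun xp)) x
          ≤ M.markovOp (fun y => ENNReal.ofReal a ^ n * M.Lfun xp y
              + M.bConst xp * ∑ k ∈ Finset.range n, ENNReal.ofReal a ^ k) x :=
            M.markovOp_mono ih x
        _ = ENNReal.ofReal a ^ n * M.markovOp (M.Lfun xp) x
              + (M.bConst xp * ∑ k ∈ Finset.range n, ENNReal.ofReal a ^ k)
                * M.markovOp (fun _ => 1) x := M.markovOp_affine _ _ _ x
        _ ≤ ENNReal.ofReal a ^ n * (ENNReal.ofReal a * M.Lfun xp x + M.bConst xp)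
              + M.bConst xp * ∑ k ∈ Finset.range n, ENNReal.ofReal a ^ k := by
            obtain ⟨j, hx⟩ : ∃ j, x ∈ M.Kset j := by
              simpa using Set.mem_iUnion.mp (M.Kset_cover ▸ Set.mem_univ x)
            rw [M.markovOp_one hx, mul_one]
            gcongr
            exact hL x
        _ = ENNReal.ofReal a ^ (n + 1) * M.Lfun xp x
              + M.bConst xp * ∑ k ∈ Finset.range (n + 1), ENNReal.ofReal a ^ k := by
            rw [Finset.sum_range_succ, pow_succ]
            ring
  intro n x
  calc (M.markovOp)^[n] (M.Lfun xp) x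
      ≤ ENNReal.ofReal a ^ n * M.Lfun xp x
        + M.bConst xp * ∑ k ∈ Finset.range n, ENNReal.ofReal a ^ k := key n x
    _ ≤ ENNReal.ofReal (a ^ n) * M.Lfun xp x + M.bConst xp / (1 - ENNReal.ofReal a) := by
        gcongr
        · rw [ENNReal.ofReal_pow ha0.le]
        · rw [div_eq_mul_inv, ← ENNReal.tsum_geometric]
          exact mul_le_mul_right (ENNReal.sum_le_tsum _) _
end

section
/- Suppose M is contractive with contraction rate 0 < a < 1. Then ∫ L dμ ≤ b/(1−a) for every invariant measure μ ∈ P(M). -/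
open MeasureTheory Filter Topology
open scoped ENNReal NNReal Classical

variable {K : Type*} [MetricSpace K] [CompleteSpace K] [MeasurableSpace K] [BorelSpace K]
  {N E : Type*} [Countable N] [Countable E]

namespace MarkovSystemAux

open MarkovSystem

variable {K : Type*} [MetricSpace K] [MeasurableSpace K] [BorelSpace K]
  {N E : Type*} [Countable N] [Countable E]

lemma exists_mem_Kset (M : MarkovSystem K N E) (x : K) : ∃ j, x ∈ M.Kset j := by
  have hx : x ∈ ⋃ j, M.Kset j := M.Kset_cover ▸ Set.mem_univ x
  simpa using hx

lemma notMem_Kset (M : MarkovSystem K N E) {x : K} {j j' : N} (hx : x ∈ M.Kset j)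
    (h : j' ≠ j) : x ∉ M.Kset j' := fun hx' =>
  Set.disjoint_left.mp (M.Kset_disjoint h) hx' hx

lemma Lfun_eq (M : MarkovSystem K N E) (xp : N → K) {x : K} {j : N} (hx : x ∈ M.Kset j) :
    M.Lfun xp x = ENNReal.ofReal (dist x (xp j)) := by
  unfold MarkovSystem.Lfun
  rw [tsum_eq_single j]
  · rw [Set.indicator_of_mem hx]
  · intro j' hj'
    exact Set.indicator_of_notMem (notMem_Kset M hx hj') _

lemma Lfun_ne_top (M : MarkovSystem K N E) (xp : N → K) (x : K) : M.Lfun xp x ≠ ⊤ := by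
  obtain ⟨j, hx⟩ := exists_mem_Kset M x
  rw [Lfun_eq M xp hx]
  exact ENNReal.ofReal_ne_top

lemma measurable_Lfun (M : MarkovSystem K N E) (xp : N → K) : Measurable (M.Lfun xp) := by
  apply Measurable.ennreal_tsum
  intro j
  exact Measurable.indicator
    ((continuous_id.dist continuous_const).measurable).ennreal_ofReal (M.Kset_measurable j)

lemma tsum_restrict (M : MarkovSystem K N E) {x : K} {j : N} (hx : x ∈ M.Kset j)
    (g : E → ℝ≥0∞) :
    ∑' e : E, ENNReal.ofReal (M.p e x) * g e
      = ∑' e : {e : E // M.i e = j}, ENNReal.ofReal (M.p e.val x) * g e.val := by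
  symm
  have h := tsum_subtype_eq_of_support_subset
    (f := fun e : E => ENNReal.ofReal (M.p e x) * g e) (s := {e : E | M.i e = j}) (by
      intro e he
      by_contra h
      have hpe : M.p e x = 0 := M.p_zero_outside e x (notMem_Kset M hx h)
      simp [hpe] at he)
  exact h

lemma tsum_p_one (M : MarkovSystem K N E) {x : K} {j : N} (hx : x ∈ M.Kset j) :
    ∑' e : {e : E // M.i e = j}, ENNReal.ofReal (M.p e.val x) = 1 := by
  have hsum : ∑' e : {e : E // M.i e = j}, M.p e.val x = 1 := M.p_tsum_one j x hx
  have hsummable : Summable (fun e : {e : E // M.i e = j} => M.p e.val x) := by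
    by_contra h
    rw [tsum_eq_zero_of_not_summable h] at hsum
    norm_num at hsum
  rw [← ENNReal.ofReal_tsum_of_nonneg (fun e => M.p_nonneg _ _) hsummable, hsum,
    ENNReal.ofReal_one]

lemma tsum_p_one' (M : MarkovSystem K N E) (x : K) :
    ∑' e : E, ENNReal.ofReal (M.p e x) = 1 := by
  obtain ⟨j, hx⟩ := exists_mem_Kset M x
  have := tsum_restrict M hx (fun _ => 1)
  simp only [mul_one] at this
  rw [this, tsum_p_one M hx]

/-- Key pointwise estimate: `U L ≤ a · L + b`. -/
lemma markov_L_le (M : MarkovSystem K N E) (xp : N → K) (hxp : ∀ j, xp j ∈ M.Kset j)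
    {a : ℝ} (ha0 : 0 < a) (hcon : M.IsContractive a) (x : K) :
    ∑' e : E, ENNReal.ofReal (M.p e x) * M.Lfun xp (M.w e x)
      ≤ ENNReal.ofReal a * M.Lfun xp x + M.bConst xp := by
  obtain ⟨j, hx⟩ := exists_mem_Kset M x
  rw [tsum_restrict M hx, Lfun_eq M xp hx]
  have h1 : ∀ e : {e : E // M.i e = j},
      ENNReal.ofReal (M.p e.val x) * M.Lfun xp (M.w e.val x)
        ≤ ENNReal.ofReal (M.p e.val x * dist (M.w e.val x) (M.w e.val (xp j)))
          + ENNReal.ofReal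
              (M.p e.val x * dist (M.w e.val (xp (M.i e.val))) (xp (M.t e.val))) := by
    intro e
    have hw : M.w e.val x ∈ M.Kset (M.t e.val) := M.w_mapsTo e.val (by rw [e.prop]; exact hx)
    rw [Lfun_eq M xp hw, ← ENNReal.ofReal_mul (M.p_nonneg _ _),
      ← ENNReal.ofReal_add (mul_nonneg (M.p_nonneg _ _) dist_nonneg)
        (mul_nonneg (M.p_nonneg _ _) dist_nonneg), ← mul_add]
    apply ENNReal.ofReal_le_ofReal
    apply mul_le_mul_of_nonneg_left _ (M.p_nonneg _ _)
    rw [e.prop]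
    exact dist_triangle _ _ _
  calc ∑' e : {e : E // M.i e = j},
        ENNReal.ofReal (M.p e.val x) * M.Lfun xp (M.w e.val x)
      ≤ ∑' e : {e : E // M.i e = j},
          (ENNReal.ofReal (M.p e.val x * dist (M.w e.val x) (M.w e.val (xp j)))
            + ENNReal.ofReal
                (M.p e.val x * dist (M.w e.val (xp (M.i e.val))) (xp (M.t e.val)))) :=
        ENNReal.tsum_le_tsum h1
    _ = (∑' e : {e : E // M.i e = j},
            ENNReal.ofReal (M.p e.val x * dist (M.w e.val x) (M.w e.val (xp j))))
          + ∑' e : {e : E // M.i e = j},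
              ENNReal.ofReal
                (M.p e.val x * dist (M.w e.val (xp (M.i e.val))) (xp (M.t e.val))) :=
        ENNReal.tsum_add
    _ ≤ ENNReal.ofReal (a * dist x (xp j)) + M.bConst xp := by
        refine add_le_add (hcon j x hx (xp j) (hxp j)) ?_
        refine le_iSup_of_le j ?_
        exact le_iSup₂_of_le x hx le_rfl
    _ = ENNReal.ofReal a * ENNReal.ofReal (dist x (xp j)) + M.bConst xp := by
        rw [ENNReal.ofReal_mul ha0.le]

/-- Invariance transfers the integral through the Markov operator. -/
lemma lintegral_eq_markov (M : MarkovSystem K N E) (μ : Measure K)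
    (hμ : M.IsInvariantMeasure μ) {f : K → ℝ≥0∞} (hf : Measurable f) :
    ∫⁻ x, f x ∂μ = ∫⁻ x, ∑' e : E, ENNReal.ofReal (M.p e x) * f (M.w e x) ∂μ := by
  conv_lhs => rw [← hμ.2]
  unfold MarkovSystem.adjOp
  rw [MeasureTheory.lintegral_sum_measure,
    lintegral_tsum (f := fun e x => ENNReal.ofReal (M.p e x) * f (M.w e x)) (fun e =>
      (((M.p_measurable e).ennreal_ofReal).mul (hf.comp (M.w_measurable e))).aemeasurable)]
  apply tsum_congr
  intro e
  rw [lintegral_map hf (M.w_measurable e),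
    lintegral_withDensity_eq_lintegral_mul (μ := μ)
      ((M.p_measurable e).ennreal_ofReal)
      (g := fun a => f (M.w e a)) (hf.comp (M.w_measurable e))]
  rfl

end MarkovSystemAux

/-- If `M` is contractive with contraction rate `0 < a < 1`, then
`∫ L dμ ≤ b/(1−a)` for every invariant measure `μ ∈ P(M)`. -/
theorem lintegral_Lfun_le_of_invariant
    (M : MarkovSystem K N E) (j0 : N) (xp : N → K) (hxp : ∀ j, xp j ∈ M.Kset j)
    (a : ℝ) (ha0 : 0 < a) (ha1 : a < 1) (hcon : M.IsContractive a)
    (μ : Measure K) (hμ : M.IsInvariantMeasure μ) :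
    ∫⁻ x, M.Lfun xp x ∂μ ≤ M.bConst xp / (1 - ENNReal.ofReal a) := by
  classical
  haveI : IsProbabilityMeasure μ := hμ.1
  set A : ℝ≥0∞ := ENNReal.ofReal a with hA
  have hA1 : A < 1 := ENNReal.ofReal_lt_one.mpr ha1
  set b : ℝ≥0∞ := M.bConst xp with hb
  set L : K → ℝ≥0∞ := M.Lfun xp with hLdef
  have hLmeas : Measurable L := MarkovSystemAux.measurable_Lfun M xp
  set C : ℝ≥0∞ := b / (1 - A) with hC
  have hBk : ∀ k : ℕ, b * ∑ i ∈ Finset.range k, A ^ i ≤ C := by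
    intro k
    rw [hC, div_eq_mul_inv, ← ENNReal.tsum_geometric]
    exact mul_le_mul_right (ENNReal.sum_le_tsum _) b
  -- the truncated iterates
  set F : ℕ → ℕ → K → ℝ≥0∞ :=
    fun n k x => min (A ^ k * L x + b * ∑ i ∈ Finset.range k, A ^ i) (n : ℝ≥0∞) with hF
  have hFmeas : ∀ n k, Measurable (F n k) := by
    intro n k
    exact ((hLmeas.const_mul _).add measurable_const).min measurable_const
  -- pointwise step
  have hstep : ∀ n k x, (∑' e : E, ENNReal.ofReal (M.p e x) * F n k (M.w e x))
      ≤ F n (k + 1) x := by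
    intro n k x
    have hone : ∑' e : E, ENNReal.ofReal (M.p e x) = 1 := MarkovSystemAux.tsum_p_one' M x
    have hmin : (∑' e : E, ENNReal.ofReal (M.p e x) * F n k (M.w e x))
        ≤ min (∑' e : E, ENNReal.ofReal (M.p e x)
            * (A ^ k * L (M.w e x) + b * ∑ i ∈ Finset.range k, A ^ i))
          (∑' e : E, ENNReal.ofReal (M.p e x) * (n : ℝ≥0∞)) := by
      refine le_min (ENNReal.tsum_le_tsum fun e => ?_) (ENNReal.tsum_le_tsum fun e => ?_)
      · exact mul_le_mul_right (min_le_left _ _) _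
      · exact mul_le_mul_right (min_le_right _ _) _
    refine hmin.trans ?_
    have h2 : (∑' e : E, ENNReal.ofReal (M.p e x) * (n : ℝ≥0∞)) = (n : ℝ≥0∞) := by
      rw [ENNReal.tsum_mul_right, hone, one_mul]
    have h1 : (∑' e : E, ENNReal.ofReal (M.p e x)
          * (A ^ k * L (M.w e x) + b * ∑ i ∈ Finset.range k, A ^ i))
        ≤ A ^ (k + 1) * L x + b * ∑ i ∈ Finset.range (k + 1), A ^ i := by
      have hexp : ∀ e : E, ENNReal.ofReal (M.p e x)
            * (A ^ k * L (M.w e x) + b * ∑ i ∈ Finset.range k, A ^ i)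
          = A ^ k * (ENNReal.ofReal (M.p e x) * L (M.w e x))
            + (b * ∑ i ∈ Finset.range k, A ^ i) * ENNReal.ofReal (M.p e x) := by
        intro e; ring
      calc (∑' e : E, ENNReal.ofReal (M.p e x)
              * (A ^ k * L (M.w e x) + b * ∑ i ∈ Finset.range k, A ^ i))
          = A ^ k * (∑' e : E, ENNReal.ofReal (M.p e x) * L (M.w e x))
            + (b * ∑ i ∈ Finset.range k, A ^ i) * ∑' e : E, ENNReal.ofReal (M.p e x) := by
            rw [tsum_congr hexp, ENNReal.tsum_add, ENNReal.tsum_mul_left,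
              ENNReal.tsum_mul_left]
        _ ≤ A ^ k * (A * L x + b) + (b * ∑ i ∈ Finset.range k, A ^ i) * 1 := by
            rw [hone]
            exact add_le_add (mul_le_mul_right
              (MarkovSystemAux.markov_L_le M xp hxp ha0 hcon x) _) le_rfl
        _ = A ^ (k + 1) * L x + b * ∑ i ∈ Finset.range (k + 1), A ^ i := by
            rw [Finset.sum_range_succ]; ring
    calc min (∑' e : E, ENNReal.ofReal (M.p e x)
            * (A ^ k * L (M.w e x) + b * ∑ i ∈ Finset.range k, A ^ i))
          (∑' e : E, ENNReal.ofReal (M.p e x) * (n : ℝ≥0∞))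
        ≤ min (A ^ (k + 1) * L x + b * ∑ i ∈ Finset.range (k + 1), A ^ i) (n : ℝ≥0∞) := by
          rw [h2]; exact min_le_min h1 le_rfl
      _ = F n (k + 1) x := rfl
  -- integrated step and induction
  have hind : ∀ n k, ∫⁻ x, F n 0 x ∂μ ≤ ∫⁻ x, F n k x ∂μ := by
    intro n k
    induction k with
    | zero => exact le_rfl
    | succ k ih =>
        refine ih.trans ?_
        rw [MarkovSystemAux.lintegral_eq_markov M μ hμ (hFmeas n k)]
        exact lintegral_mono fun x => hstep n k x
  -- bound each F n k integral
  have hFk_le : ∀ n k, ∫⁻ x, F n k x ∂μ ≤ (∫⁻ x, min (A ^ k * L x) (n : ℝ≥0∞) ∂μ) + C := by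
    intro n k
    have hpt : ∀ x, F n k x ≤ min (A ^ k * L x) (n : ℝ≥0∞) + C := by
      intro x
      have : F n k x ≤ min (A ^ k * L x + C) (n : ℝ≥0∞) :=
        min_le_min (add_le_add le_rfl (hBk k)) le_rfl
      refine this.trans ?_
      rcases le_total (A ^ k * L x) (n : ℝ≥0∞) with h | h
      · rw [min_eq_left h]
        exact min_le_left _ _
      · rw [min_eq_right h]
        exact (min_le_right _ _).trans le_self_add
    calc ∫⁻ x, F n k x ∂μ ≤ ∫⁻ x, min (A ^ k * L x) (n : ℝ≥0∞) + C ∂μ :=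
          lintegral_mono hpt
      _ = (∫⁻ x, min (A ^ k * L x) (n : ℝ≥0∞) ∂μ) + C := by
          rw [lintegral_add_right _ measurable_const, lintegral_const, measure_univ, mul_one]
  -- the middle integral tends to zero
  have htend : ∀ n : ℕ, Tendsto (fun k => ∫⁻ x, min (A ^ k * L x) (n : ℝ≥0∞) ∂μ)
      atTop (𝓝 0) := by
    intro n
    have h0 : (0 : ℝ≥0∞) = ∫⁻ _, (0 : ℝ≥0∞) ∂μ := by simp
    rw [h0]
    apply tendsto_lintegral_of_dominated_convergence (bound := fun _ => (n : ℝ≥0∞))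
    · intro k
      exact (hLmeas.const_mul _).min measurable_const
    · intro k
      exact Filter.Eventually.of_forall fun x => min_le_right _ _
    · simp
    · refine Filter.Eventually.of_forall fun x => ?_
      have hx : Tendsto (fun k : ℕ => A ^ k * L x) atTop (𝓝 0) := by
        have := ENNReal.Tendsto.mul_const
          (ENNReal.tendsto_pow_atTop_nhds_zero_of_lt_one hA1)
          (Or.inr (MarkovSystemAux.Lfun_ne_top M xp x))
        simpa using this
      exact tendsto_of_tendsto_of_tendsto_of_le_of_le tendsto_const_nhds hx
        (fun k => zero_le) (fun k => min_le_left _ _)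
  -- conclude for each truncation
  have htrunc : ∀ n : ℕ, ∫⁻ x, min (L x) (n : ℝ≥0∞) ∂μ ≤ C := by
    intro n
    have hF0 : ∀ x, min (L x) (n : ℝ≥0∞) = F n 0 x := by
      intro x; simp [hF]
    have hle : ∀ k, ∫⁻ x, min (L x) (n : ℝ≥0∞) ∂μ
        ≤ (∫⁻ x, min (A ^ k * L x) (n : ℝ≥0∞) ∂μ) + C := by
      intro k
      calc ∫⁻ x, min (L x) (n : ℝ≥0∞) ∂μ = ∫⁻ x, F n 0 x ∂μ := by
            congr 1; ext x; exact hF0 x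
        _ ≤ ∫⁻ x, F n k x ∂μ := hind n k
        _ ≤ _ := hFk_le n k
    have hlim : Tendsto (fun k => (∫⁻ x, min (A ^ k * L x) (n : ℝ≥0∞) ∂μ) + C)
        atTop (𝓝 (0 + C)) := (htend n).add tendsto_const_nhds
    rw [zero_add] at hlim
    exact ge_of_tendsto' hlim hle
  -- monotone convergence
  have hsup : ∀ x, (⨆ n : ℕ, min (L x) (n : ℝ≥0∞)) = L x := by
    intro x
    obtain ⟨m, hm⟩ := ENNReal.exists_nat_gt (MarkovSystemAux.Lfun_ne_top M xp x)
    refine le_antisymm (iSup_le fun n => min_le_left _ _) ?_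
    exact le_iSup_of_le m (le_min le_rfl hm.le)
  have hmono : Monotone (fun (n : ℕ) (x : K) => min (L x) (n : ℝ≥0∞)) := by
    intro n m hnm x
    exact min_le_min le_rfl (by exact_mod_cast Nat.cast_le.mpr hnm)
  calc ∫⁻ x, L x ∂μ = ∫⁻ x, ⨆ n : ℕ, min (L x) (n : ℝ≥0∞) ∂μ := by
        congr 1; ext x; exact (hsup x).symm
    _ = ⨆ n : ℕ, ∫⁻ x, min (L x) (n : ℝ≥0∞) ∂μ :=
        lintegral_iSup (fun n => hLmeas.min measurable_const) hmono
    _ ≤ C := iSup_le htrunc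
end
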